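/- Let ζ ∈ ℝ, let Λ = diag(1, −1) ∈ Matrix (Fin 2) (Fin 2) ℂ, and let Q : ℝ → Matrix (Fin 2) (Fin 2) ℂ satisfy Q(x)† = −Q(x) for all x (anti-Hermitian potential). Suppose J : ℝ → Matrix (Fin 2) (Fin 2) ℂ is differentiable and satisfies J'(x) = −iζ(Λ·J(x) − J(x)·Λ) + Q(x)·J(x) for all x. Then D(x) := J(x)† · J(x) satisfies D'(x) = −iζ(Λ·D(x) − D(x)·Λ) for all x; consequently, if J(x₀)†·J(x₀) = I for some x₀ ∈ ℝ, then J(x)†·J(x) = I for all x ∈ ℝ. -/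

import Mathlib

open Matrix Complex

/-- scalar linear ODE with constant coefficient -/
lemma ode_const (c : ℂ) (f : ℝ → ℂ) (hf : ∀ x, HasDerivAt f (c * f x) x)
    (x₀ x : ℝ) : f x = f x₀ * Complex.exp (c * (x - x₀)) := by
  set g : ℝ → ℂ := fun s => f s * Complex.exp (-c * s) with hg
  have hg' : ∀ s, HasDerivAt g 0 s := by
    intro s
    have he : HasDerivAt (fun t : ℝ => Complex.exp (-c * t)) (Complex.exp (-c * s) * (-c)) s := by
      have := ((hasDerivAt_id (s : ℂ)).const_mul (-c)).comp_ofReal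
      simpa using this.cexp
    have := (hf s).mul he
    convert this using 1
    · rfl
    · rfl
    · ring
  have hconst : g x = g x₀ := by
    have hd : Differentiable ℝ g := fun s => (hg' s).differentiableAt
    have : ∀ s, deriv g s = 0 := fun s => (hg' s).deriv
    have := is_const_of_deriv_eq_zero hd this x x₀
    exact this
  have hne : Complex.exp (-c * x) ≠ 0 := Complex.exp_ne_zero _
  have : f x = f x₀ * Complex.exp (-c * x₀) * Complex.exp (c * x) := by
    have h2 := congrArg (· * Complex.exp (c * x)) hconst
    simp only [hg] at h2
    have : f x * Complex.exp (-c * x) * Complex.exp (c * x) = f x := by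
      rw [mul_assoc, ← Complex.exp_add]
      simp
    rw [this] at h2
    exact h2
  rw [this, mul_assoc, ← Complex.exp_add]
  ring_nf

theorem involution_JdaggerJ
    (ζ : ℝ) (Q J : ℝ → Matrix (Fin 2) (Fin 2) ℂ)
    (Λ : Matrix (Fin 2) (Fin 2) ℂ) (hΛ : Λ = Matrix.diagonal ![1, -1])
    (hQ : ∀ x : ℝ, (Q x)ᴴ = -(Q x))
    (hJ : ∀ i j : Fin 2, ∀ x : ℝ,
      HasDerivAt (fun s => J s i j)
        (((-(Complex.I * (ζ : ℂ))) • (Λ * J x - J x * Λ) + Q x * J x) i j) x) :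
    (∀ i j : Fin 2, ∀ x : ℝ,
      HasDerivAt (fun s => ((J s)ᴴ * J s) i j)
        (((-(Complex.I * (ζ : ℂ))) • (Λ * ((J x)ᴴ * J x) - ((J x)ᴴ * J x) * Λ)) i j) x)
    ∧ (∀ x₀ : ℝ, (J x₀)ᴴ * J x₀ = 1 → ∀ x : ℝ, (J x)ᴴ * J x = 1) := by
  set A : ℝ → Matrix (Fin 2) (Fin 2) ℂ :=
    fun x => (-(Complex.I * (ζ : ℂ))) • (Λ * J x - J x * Λ) + Q x * J x with hA
  have hΛH : Λᴴ = Λ := by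
    rw [hΛ]
    ext i j
    fin_cases i <;> fin_cases j <;> simp [Matrix.conjTranspose_apply, Matrix.diagonal]
  -- key algebraic identity
  have key : ∀ x, (A x)ᴴ * J x + (J x)ᴴ * A x
      = (-(Complex.I * (ζ : ℂ))) • (Λ * ((J x)ᴴ * J x) - ((J x)ᴴ * J x) * Λ) := by
    intro x
    have hc : star (-(Complex.I * (ζ : ℂ))) = Complex.I * ζ := by
      simp [Complex.ext_iff]
    simp only [hA, Matrix.conjTranspose_add, Matrix.conjTranspose_smul,
      Matrix.conjTranspose_mul, Matrix.conjTranspose_sub, hΛH, hQ, hc]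
    simp only [Matrix.add_mul, Matrix.mul_add, Matrix.smul_mul, Matrix.mul_smul,
      Matrix.sub_mul, Matrix.mul_sub, Matrix.neg_mul, Matrix.mul_neg, Matrix.mul_assoc]
    module
  -- part 1
  have part1 : ∀ i j : Fin 2, ∀ x : ℝ,
      HasDerivAt (fun s => ((J s)ᴴ * J s) i j)
        (((-(Complex.I * (ζ : ℂ))) • (Λ * ((J x)ᴴ * J x) - ((J x)ᴴ * J x) * Λ)) i j) x := by
    intro i j x
    have hsum : HasDerivAt (fun s => ∑ k, star (J s k i) * J s k j)
        (∑ k, (star (A x k i) * J x k j + star (J x k i) * A x k j)) x := by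
      apply HasDerivAt.fun_sum
      intro k _
      exact ((hJ k i x).star).mul (hJ k j x)
    have heq : (∑ k, (star (A x k i) * J x k j + star (J x k i) * A x k j))
        = ((-(Complex.I * (ζ : ℂ))) • (Λ * ((J x)ᴴ * J x) - ((J x)ᴴ * J x) * Λ)) i j := by
      rw [← key x]
      simp [Matrix.add_apply, Matrix.mul_apply, Matrix.conjTranspose_apply,
        Finset.sum_add_distrib]
    rw [heq] at hsum
    exact hsum
  refine ⟨part1, ?_⟩
  intro x₀ h0 x
  ext i j
  set c : ℂ := -(Complex.I * (ζ : ℂ)) * (Λ i i - Λ j j) with hc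
  have hdiag : ∀ k l : Fin 2, k ≠ l → Λ k l = 0 := by
    intro k l hkl; rw [hΛ]; exact Matrix.diagonal_apply_ne _ hkl
  have hf : ∀ s, HasDerivAt (fun t => ((J t)ᴴ * J t) i j) (c * ((J s)ᴴ * J s) i j) s := by
    intro s
    have := part1 i j s
    convert this using 1
    set D := (J s)ᴴ * J s
    have hL : (Λ * D) i j = Λ i i * D i j := by
      rw [Matrix.mul_apply]
      rw [Finset.sum_eq_single i]
      · intro b _ hb; simp [hdiag i b (Ne.symm hb)]
      · simp
    have hR : (D * Λ) i j = D i j * Λ j j := by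
      rw [Matrix.mul_apply]
      rw [Finset.sum_eq_single j]
      · intro b _ hb; simp [hdiag b j hb]
      · simp
    simp only [Matrix.smul_apply, Matrix.sub_apply, hL, hR, hc, smul_eq_mul]
    ring
  have := ode_const c (fun t => ((J t)ᴴ * J t) i j) hf x₀ x
  rw [this, h0]
  by_cases hij : i = j
  · subst hij
    have : c = 0 := by rw [hc]; ring
    simp [this]
  · simp [Matrix.one_apply_ne hij]
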